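/- With the recursive decomposition H_0 ⊂ H_1 ⊂ … ⊂ H_K = {1,…,N} and values θ_1 < … < θ_K as defined from parameters (a_n, b_n) and constants I_S, define q_n = τ p_n (b_n + θ_k)/a_n for n ∈ H_k ∖ H_{k−1} and w_n = q_n/p_n. Then Σ_{n∈H_k} w_n = τ − I_{H_k} for every k = 1,…,K. -/

import Mathlib

open Finset

/-- Total-workload identity for the water-filling decomposition: with
`H 0 = ∅ ⊂ H 1 ⊂ … ⊂ H K` and `θ k` the value of the minimized ratio at step `k`,
the workloads `w n = τ (b n + θ k) / a n` for `n ∈ H k \ H (k-1)` satisfy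
`∑_{n ∈ H k} w n = τ - I (H k)` for every `k = 1,…,K` (telescoping, with
`I ∅ = τ`). -/
theorem stmt_10 (N : ℕ) (τ : ℝ) (hτ : 0 < τ)
    (a b : Fin N → ℝ) (ha : ∀ n, 0 < a n) (hb : ∀ n, 0 ≤ b n)
    (I : Finset (Fin N) → ℝ)
    (hI : ∀ S, 0 ≤ I S ∧ I S ≤ τ) (hIempty : I ∅ = τ)
    (K : ℕ) (H : ℕ → Finset (Fin N)) (θ : ℕ → ℝ)
    (hH0 : H 0 = ∅)
    (hchain : ∀ k, 1 ≤ k → k ≤ K → H (k-1) ⊂ H k)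
    (hθ : ∀ k, 1 ≤ k → k ≤ K →
      θ k = ((I (H (k-1)) - I (H k)) / τ - ∑ n ∈ H k \ H (k-1), b n / a n) /
            (∑ n ∈ H k \ H (k-1), 1 / a n))
    (w : Fin N → ℝ)
    (hw : ∀ k, 1 ≤ k → k ≤ K → ∀ n ∈ H k \ H (k-1), w n = τ * (b n + θ k) / a n) :
    ∀ k, 1 ≤ k → k ≤ K → ∑ n ∈ H k, w n = τ - I (H k) := by
  -- step lemma: sum over the new indices telescopes
  have step : ∀ k, 1 ≤ k → k ≤ K →
      ∑ n ∈ H k \ H (k-1), w n = I (H (k-1)) - I (H k) := by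
    intro k hk1 hkK
    have hsub := hchain k hk1 hkK
    have hne : (H k \ H (k-1)).Nonempty := by
      obtain ⟨x, hx, hnx⟩ := exists_of_ssubset hsub
      exact ⟨x, mem_sdiff.2 ⟨hx, hnx⟩⟩
    have hDpos : 0 < ∑ n ∈ H k \ H (k-1), 1 / a n :=
      Finset.sum_pos (fun n _ => one_div_pos.2 (ha n)) hne
    have hθk := hθ k hk1 hkK
    have key : ∑ n ∈ H k \ H (k-1), w n
        = τ * (∑ n ∈ H k \ H (k-1), b n / a n)
          + τ * θ k * (∑ n ∈ H k \ H (k-1), 1 / a n) := by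
      rw [Finset.mul_sum, Finset.mul_sum, ← Finset.sum_add_distrib]
      apply Finset.sum_congr rfl
      intro n hn
      rw [hw k hk1 hkK n hn]
      have := (ha n).ne'
      field_simp
    have hD := hDpos.ne'
    have hτ' := hτ.ne'
    rw [key, hθk]
    field_simp
    ring
  intro k hk1 hkK
  induction k with
  | zero => omega
  | succ m ih =>
    have hsub := hchain (m+1) (by omega) hkK
    simp only [Nat.add_sub_cancel] at hsub
    have hprev : ∑ n ∈ H m, w n = τ - I (H m) := by
      rcases Nat.eq_zero_or_pos m with h | h
      · subst h; simp [hH0, hIempty]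
      · exact ih h (by omega)
    have hstep := step (m+1) (by omega) hkK
    simp only [Nat.add_sub_cancel] at hstep
    rw [← Finset.sum_sdiff hsub.subset, hstep, hprev]
    ring
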